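/- Incompleteness of CN for epistemic weight models: the Sure Thing formula B_a(p,q) ∧ B_a(¬p,q) → B_a(⊤,q) (for a propositional letters p,q and an agent a) is valid on all epistemic weight models but is not derivable in the CN calculus; hence the CN calculus is sound but not complete with respect to epistemic weight models. -/
import Mathlib


/-- The language L_CN: `φ ::= ⊤ | p | ¬φ | (φ∧φ) | B_a(φ,φ)`. -/
inductive CNForm (Agt Prp : Type) : Type
  | top : CNForm Agt Prp
  | atom : Prp → CNForm Agt Prp
  | neg : CNForm Agt Prp → CNForm Agt Prp
  | and : CNForm Agt Prp → CNForm Agt Prp → CNForm Agt Prp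
  | bel : Agt → CNForm Agt Prp → CNForm Agt Prp → CNForm Agt Prp
namespace CNForm

/-- Material implication, defined from `¬` and `∧`. -/
def imp {Agt Prp : Type} (φ ψ : CNForm Agt Prp) : CNForm Agt Prp := .neg (.and φ (.neg ψ))

/-- Disjunction, defined from `¬` and `∧`. -/
def or {Agt Prp : Type} (φ ψ : CNForm Agt Prp) : CNForm Agt Prp := .neg (.and (.neg φ) (.neg ψ))

/-- Biconditional. -/
def iff {Agt Prp : Type} (φ ψ : CNForm Agt Prp) : CNForm Agt Prp := .and (imp φ ψ) (imp ψ φ)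

/-- Knowledge: `K_a φ := ¬B_a(¬φ,⊤)`. -/
def K {Agt Prp : Type} (a : Agt) (φ : CNForm Agt Prp) : CNForm Agt Prp := .neg (.bel a (.neg φ) .top)

end CNForm

/-- Boolean evaluation of a formula under an assignment `v` of truth values to
the "atomic" formulas (proposition letters and belief formulas), interpreting
`⊤`, `¬`, `∧` classically. -/
def boolEval {Agt Prp : Type} (v : CNForm Agt Prp → Prop) : CNForm Agt Prp → Prop
  | .top => True
  | .atom p => v (.atom p)
  | .neg φ => ¬ boolEval v φ
  | .and φ ψ => boolEval v φ ∧ boolEval v ψ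
  | .bel a φ ψ => v (.bel a φ ψ)

/-- `φ` is an instance of a propositional tautology: it evaluates to true under
every assignment of truth values to proposition letters and belief formulas. -/
def CNTaut {Agt Prp : Type} (φ : CNForm Agt Prp) : Prop := ∀ v, boolEval v φ

/-- The CN calculus. -/
inductive CNDeriv {Agt Prp : Type} : CNForm Agt Prp → Prop
  | taut {φ : CNForm Agt Prp} : CNTaut φ → CNDeriv φ
  | distK (a : Agt) (φ ψ : CNForm Agt Prp) :
      CNDeriv ((CNForm.K a (φ.imp ψ)).imp ((CNForm.K a φ).imp (CNForm.K a ψ)))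
  | tAx (a : Agt) (φ : CNForm Agt Prp) : CNDeriv ((CNForm.K a φ).imp φ)
  | fiveB (a : Agt) (φ ψ : CNForm Agt Prp) :
      CNDeriv ((CNForm.bel a φ ψ).imp (CNForm.K a (.bel a φ ψ)))
  | fourB (a : Agt) (φ ψ : CNForm Agt Prp) :
      CNDeriv ((CNForm.neg (.bel a φ ψ)).imp (CNForm.K a (.neg (.bel a φ ψ))))
  | dAx (a : Agt) (φ ψ : CNForm Agt Prp) :
      CNDeriv ((CNForm.bel a φ ψ).imp (.neg (.bel a φ (.neg ψ))))
  | ecAx (a : Agt) (φ ψ χ : CNForm Agt Prp) :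
      CNDeriv ((CNForm.K a (φ.iff ψ)).imp ((CNForm.bel a φ χ).imp (.bel a ψ χ)))
  | mAx (a : Agt) (φ ψ χ : CNForm Agt Prp) :
      CNDeriv ((CNForm.K a (φ.imp ψ)).imp ((CNForm.bel a χ φ).imp (.bel a χ ψ)))
  | cAx (a : Agt) (φ ψ : CNForm Agt Prp) :
      CNDeriv ((CNForm.bel a φ ψ).imp (.bel a φ (.and φ ψ)))
  | scAx (a : Agt) (φ ψ χ : CNForm Agt Prp) :
      CNDeriv (((CNForm.neg (.bel a χ (.neg φ))).and
          (.neg (CNForm.K a (.neg (χ.and ((CNForm.neg φ).and ψ)))))).imp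
        (.bel a χ (φ.or ψ)))
  | mp {φ ψ : CNForm Agt Prp} : CNDeriv (φ.imp ψ) → CNDeriv φ → CNDeriv ψ
  | necK {φ : CNForm Agt Prp} (a : Agt) : CNDeriv φ → CNDeriv (CNForm.K a φ)

/-- An epistemic weight model `(W, ∼, L, V)`: `W` nonempty countable, `∼_a`
equivalence relations, `L_a : W → ℚ` positive with summable weights on each
knowledge cell, `V` a valuation. -/
structure WeightModel (Agt Prp W : Type) : Type where
  nonempty : Nonempty W
  countable : Countable W
  sim : Agt → W → W → Prop
  equiv : ∀ a, Equivalence (sim a)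
  wt : Agt → W → ℚ
  wt_pos : ∀ a w, 0 < wt a w
  wt_summable : ∀ a w, Summable (fun u : {v // sim a w v} => ((wt a u.1 : ℚ) : ℝ))
  V : Prp → Set W

/-- Truth of an L_CN formula in an epistemic weight model:
`B_a(φ,ψ)` holds at `w` iff the total weight of `[w]_a ∩ ⟦φ∧ψ⟧` strictly
exceeds the total weight of `[w]_a ∩ ⟦φ∧¬ψ⟧`. -/
def WeightModel.truth {Agt Prp W : Type} (M : WeightModel Agt Prp W) :
    CNForm Agt Prp → W → Prop
  | .top, _ => True
  | .atom p, w => w ∈ M.V p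
  | .neg φ, w => ¬ M.truth φ w
  | .and φ ψ, w => M.truth φ w ∧ M.truth ψ w
  | .bel a φ ψ, w =>
      (∑' u : {v // M.sim a w v ∧ M.truth φ v ∧ M.truth ψ v}, ((M.wt a u.1 : ℚ) : ℝ)) >
      (∑' u : {v // M.sim a w v ∧ M.truth φ v ∧ ¬ M.truth ψ v}, ((M.wt a u.1 : ℚ) : ℝ))


/-- Weights on a four-element set. -/
def wgt : Fin 4 → ℚ := fun x => if x.val < 2 then 3 else 2

lemma wgt_pos (x : Fin 4) : 0 < wgt x := by
  unfold wgt; split <;> norm_num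

section NuDef
open Classical

/-- A strictly monotone but non-additive "capacity" on subsets of `Fin 4`. -/
noncomputable def nu (A : Set (Fin 4)) : ℚ :=
  (∑ x : Fin 4, if x ∈ A then wgt x else 0) +
    (if (2 : Fin 4) ∈ A ∧ (3 : Fin 4) ∈ A then 3 else 0)

end NuDef

lemma nu_mono {A B : Set (Fin 4)} (h : A ⊆ B) : nu A ≤ nu B := by
  classical
  unfold nu
  refine add_le_add (Finset.sum_le_sum fun i _ => ?_) ?_
  · split_ifs with h1 h2 h2
    · exact le_rfl
    · exact absurd (h h1) h2
    · exact (wgt_pos i).le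
    · exact le_rfl
  · split_ifs with h1 h2 h2
    · exact le_rfl
    · exact absurd ⟨h h1.1, h h1.2⟩ h2
    · norm_num
    · exact le_rfl

lemma nu_insert_lt {A : Set (Fin 4)} {z : Fin 4} (hz : z ∉ A) :
    nu A < nu (insert z A) := by
  classical
  unfold nu
  refine add_lt_add_of_lt_of_le ?_ ?_
  · refine Finset.sum_lt_sum (fun i _ => ?_) ⟨z, Finset.mem_univ z, ?_⟩
    · split_ifs with h1 h2 h2
      · exact le_rfl
      · exact absurd (Set.mem_insert_of_mem z h1) h2
      · exact (wgt_pos i).le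
      · exact le_rfl
    · rw [if_neg hz, if_pos (Set.mem_insert z A)]
      exact wgt_pos z
  · split_ifs with h1 h2 h2
    · exact le_rfl
    · exact absurd ⟨Set.mem_insert_of_mem z h1.1, Set.mem_insert_of_mem z h1.2⟩ h2
    · norm_num
    · exact le_rfl

lemma nu_empty : nu (∅ : Set (Fin 4)) = 0 := by
  simp [nu]

lemma nu_pos {A : Set (Fin 4)} (h : A.Nonempty) : 0 < nu A := by
  obtain ⟨z, hz⟩ := h
  calc 0 = nu ∅ := nu_empty.symm
    _ < nu (insert z ∅) := nu_insert_lt (Set.notMem_empty z)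
    _ ≤ nu A := nu_mono (by simpa using hz)

open Classical in
lemma nu_four (A : Set (Fin 4)) :
    nu A = (if (0:Fin 4) ∈ A then (3:ℚ) else 0) + (if (1:Fin 4) ∈ A then 3 else 0) +
      (if (2:Fin 4) ∈ A then 2 else 0) + (if (3:Fin 4) ∈ A then 2 else 0) +
      (if (2:Fin 4) ∈ A ∧ (3:Fin 4) ∈ A then 3 else 0) := by
  classical
  have w0 : wgt 0 = 3 := rfl
  have w1 : wgt 1 = 3 := rfl
  have w2 : wgt 2 = 2 := rfl
  have w3 : wgt 3 = 2 := rfl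
  unfold nu
  rw [Fin.sum_univ_four, w0, w1, w2, w3]

section Counter

variable {Agt Prp : Type} (p q : Prp)

/-- The countermodel semantics: a single epistemic cell `Fin 4`, with `p`
interpreted as `{0,2}`, `q` as `{0,1}`, and belief interpreted through the
non-additive capacity `nu`. -/
def Tr (p q : Prp) : CNForm Agt Prp → Fin 4 → Prop
  | .top, _ => True
  | .atom r, w => (r = p ∧ w ∈ ({0, 2} : Set (Fin 4))) ∨ (r = q ∧ w ∈ ({0, 1} : Set (Fin 4)))
  | .neg φ, w => ¬ Tr p q φ w
  | .and φ ψ, w => Tr p q φ w ∧ Tr p q ψ w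
  | .bel _ φ ψ, _ => nu {v | Tr p q φ v ∧ Tr p q ψ v} > nu {v | Tr p q φ v ∧ ¬ Tr p q ψ v}

lemma Tr_top (w : Fin 4) : Tr (Agt := Agt) p q .top w ↔ True := by simp [Tr]

lemma Tr_neg (φ : CNForm Agt Prp) (w : Fin 4) : Tr p q φ.neg w ↔ ¬ Tr p q φ w := by simp [Tr]

lemma Tr_and (φ ψ : CNForm Agt Prp) (w : Fin 4) :
    Tr p q (φ.and ψ) w ↔ (Tr p q φ w ∧ Tr p q ψ w) := by simp [Tr]

lemma Tr_bel (a : Agt) (φ ψ : CNForm Agt Prp) (w : Fin 4) :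
    Tr p q (.bel a φ ψ) w ↔
      nu {v | Tr p q φ v ∧ Tr p q ψ v} > nu {v | Tr p q φ v ∧ ¬ Tr p q ψ v} := by simp [Tr]

lemma Tr_imp (φ ψ : CNForm Agt Prp) (w : Fin 4) :
    Tr p q (φ.imp ψ) w ↔ (Tr p q φ w → Tr p q ψ w) := by
  rw [CNForm.imp, Tr_neg, Tr_and, Tr_neg]
  tauto

lemma Tr_or (φ ψ : CNForm Agt Prp) (w : Fin 4) :
    Tr p q (φ.or ψ) w ↔ (Tr p q φ w ∨ Tr p q ψ w) := by
  rw [CNForm.or, Tr_neg, Tr_and, Tr_neg, Tr_neg]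
  tauto

lemma Tr_iff (φ ψ : CNForm Agt Prp) (w : Fin 4) :
    Tr p q (φ.iff ψ) w ↔ (Tr p q φ w ↔ Tr p q ψ w) := by
  rw [CNForm.iff, Tr_and, Tr_imp, Tr_imp]
  tauto

lemma Tr_K (a : Agt) (φ : CNForm Agt Prp) (w : Fin 4) :
    Tr p q (CNForm.K a φ) w ↔ ∀ v, Tr p q φ v := by
  rw [CNForm.K, Tr_neg, Tr_bel]
  have h1 : {v : Fin 4 | Tr p q φ.neg v ∧ ¬ Tr p q (CNForm.top : CNForm Agt Prp) v} =
      (∅ : Set (Fin 4)) := by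
    ext v; simp [Tr_top]
  have h2 : {v : Fin 4 | Tr p q φ.neg v ∧ Tr p q (CNForm.top : CNForm Agt Prp) v} =
      {v | ¬ Tr p q φ v} := by
    ext v; simp [Tr_top, Tr_neg]
  rw [h1, h2, nu_empty]
  constructor
  · intro h v
    by_contra hv
    exact h (nu_pos ⟨v, hv⟩)
  · intro h
    have he : {v : Fin 4 | ¬ Tr p q φ v} = (∅ : Set (Fin 4)) := by
      ext v; simp [h v]
    rw [he, nu_empty]
    simp

lemma Tr_boolEval (w : Fin 4) : ∀ φ : CNForm Agt Prp,
    boolEval (fun ψ => Tr p q ψ w) φ ↔ Tr p q φ w := by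
  intro φ
  induction φ with
  | top => simp [boolEval, Tr_top]
  | atom r => simp [boolEval]
  | neg φ ih => rw [boolEval, Tr_neg]; exact not_congr ih
  | and φ ψ ih1 ih2 => rw [boolEval, Tr_and]; exact and_congr ih1 ih2
  | bel a φ ψ _ _ => simp [boolEval]

/-- Soundness of CN for the countermodel semantics. -/
lemma Tr_sound {φ : CNForm Agt Prp} (h : CNDeriv φ) : ∀ w, Tr p q φ w := by
  induction h with
  | @taut φ ht =>
      intro w
      exact (Tr_boolEval p q w φ).mp (ht _)
  | distK a φ ψ =>
      intro w
      rw [Tr_imp, Tr_K, Tr_imp, Tr_K, Tr_K]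
      intro h1 h2 v
      exact (Tr_imp p q φ ψ v).mp (h1 v) (h2 v)
  | tAx a φ =>
      intro w
      rw [Tr_imp, Tr_K]
      intro h
      exact h w
  | fiveB a φ ψ =>
      intro w
      rw [Tr_imp, Tr_K]
      intro h v
      rw [Tr_bel] at h ⊢
      exact h
  | fourB a φ ψ =>
      intro w
      rw [Tr_imp, Tr_K]
      intro h v
      rw [Tr_neg, Tr_bel] at h ⊢
      exact h
  | dAx a φ ψ =>
      intro w
      rw [Tr_imp, Tr_bel, Tr_neg, Tr_bel]
      intro h
      have e : {v : Fin 4 | Tr p q φ v ∧ ¬ Tr p q ψ.neg v} = {v | Tr p q φ v ∧ Tr p q ψ v} := by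
        ext v; simp [Tr_neg]
      have e' : {v : Fin 4 | Tr p q φ v ∧ Tr p q ψ.neg v} = {v | Tr p q φ v ∧ ¬ Tr p q ψ v} := by
        ext v; simp [Tr_neg]
      rw [e, e']
      linarith
  | ecAx a φ ψ χ =>
      intro w
      rw [Tr_imp, Tr_K, Tr_imp, Tr_bel, Tr_bel]
      intro h hb
      have hiff : ∀ v, Tr p q φ v ↔ Tr p q ψ v := fun v => (Tr_iff p q φ ψ v).mp (h v)
      have e1 : {v : Fin 4 | Tr p q ψ v ∧ Tr p q χ v} = {v | Tr p q φ v ∧ Tr p q χ v} := by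
        ext v; simp [hiff v]
      have e2 : {v : Fin 4 | Tr p q ψ v ∧ ¬ Tr p q χ v} = {v | Tr p q φ v ∧ ¬ Tr p q χ v} := by
        ext v; simp [hiff v]
      rw [e1, e2]
      exact hb
  | mAx a φ ψ χ =>
      intro w
      rw [Tr_imp, Tr_K, Tr_imp, Tr_bel, Tr_bel]
      intro h hb
      have himp : ∀ v, Tr p q φ v → Tr p q ψ v := fun v => (Tr_imp p q φ ψ v).mp (h v)
      have m1 : nu {v | Tr p q χ v ∧ Tr p q φ v} ≤ nu {v | Tr p q χ v ∧ Tr p q ψ v} :=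
        nu_mono (fun v hv => ⟨hv.1, himp v hv.2⟩)
      have m2 : nu {v | Tr p q χ v ∧ ¬ Tr p q ψ v} ≤ nu {v | Tr p q χ v ∧ ¬ Tr p q φ v} :=
        nu_mono (fun v hv => ⟨hv.1, fun hf => hv.2 (himp v hf)⟩)
      linarith
  | cAx a φ ψ =>
      intro w
      rw [Tr_imp, Tr_bel, Tr_bel]
      intro hb
      have e1 : {v : Fin 4 | Tr p q φ v ∧ Tr p q (φ.and ψ) v} =
          {v | Tr p q φ v ∧ Tr p q ψ v} := by
        ext v; simp only [Set.mem_setOf_eq, Tr_and]; tauto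
      have e2 : {v : Fin 4 | Tr p q φ v ∧ ¬ Tr p q (φ.and ψ) v} =
          {v | Tr p q φ v ∧ ¬ Tr p q ψ v} := by
        ext v; simp only [Set.mem_setOf_eq, Tr_and]; tauto
      rw [e1, e2]
      exact hb
  | scAx a φ ψ χ =>
      intro w
      rw [Tr_imp, Tr_and, Tr_neg, Tr_neg, Tr_bel, Tr_K, Tr_bel]
      rintro ⟨h1, h2⟩
      have e0 : {v : Fin 4 | Tr p q χ v ∧ ¬ Tr p q φ.neg v} = {v | Tr p q χ v ∧ Tr p q φ v} := by
        ext v; simp [Tr_neg]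
      have e0' : {v : Fin 4 | Tr p q χ v ∧ Tr p q φ.neg v} = {v | Tr p q χ v ∧ ¬ Tr p q φ v} := by
        ext v; simp [Tr_neg]
      rw [e0, e0'] at h1
      push_neg at h1
      have h2' : ∃ v, Tr p q χ v ∧ ¬ Tr p q φ v ∧ Tr p q ψ v := by
        by_contra hall
        push_neg at hall
        apply h2
        intro v
        rw [Tr_neg, Tr_and, Tr_and, Tr_neg]
        rintro ⟨hχ, hφ, hψ⟩
        exact (hall v hχ hφ) hψ
      obtain ⟨z, hzχ, hzφ, hzψ⟩ := h2'
      set X : Set (Fin 4) := {v | Tr p q χ v ∧ Tr p q φ v} with hX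
      have hzX : z ∉ X := fun hz => hzφ hz.2
      have c1 : nu {v : Fin 4 | Tr p q χ v ∧ ¬ Tr p q (φ.or ψ) v} ≤
          nu {v | Tr p q χ v ∧ ¬ Tr p q φ v} := by
        refine nu_mono fun v hv => ?_
        simp only [Set.mem_setOf_eq, Tr_or] at hv
        exact ⟨hv.1, fun hf => hv.2 (Or.inl hf)⟩
      have c2 : nu (insert z X) ≤ nu {v : Fin 4 | Tr p q χ v ∧ Tr p q (φ.or ψ) v} := by
        refine nu_mono fun v hv => ?_
        simp only [Set.mem_setOf_eq, Tr_or]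
        rcases hv with rfl | hv
        · exact ⟨hzχ, Or.inr hzψ⟩
        · exact ⟨hv.1, Or.inl hv.2⟩
      have c3 : nu X < nu (insert z X) := nu_insert_lt hzX
      linarith
  | mp h1 h2 ih1 ih2 =>
      intro w
      exact (Tr_imp p q _ _ w).mp (ih1 w) (ih2 w)
  | necK a h ih =>
      intro w
      exact (Tr_K p q a _ w).mpr ih

end Counter

section Validity

variable {Agt Prp : Type}

lemma weight_sure {W : Type} (M : WeightModel Agt Prp W) (a : Agt) (w : W) (P Q : W → Prop)
    (h1 : (∑' u : {v // M.sim a w v ∧ P v ∧ Q v}, ((M.wt a u.1 : ℚ) : ℝ)) >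
      (∑' u : {v // M.sim a w v ∧ P v ∧ ¬ Q v}, ((M.wt a u.1 : ℚ) : ℝ)))
    (h2 : (∑' u : {v // M.sim a w v ∧ ¬ P v ∧ Q v}, ((M.wt a u.1 : ℚ) : ℝ)) >
      (∑' u : {v // M.sim a w v ∧ ¬ P v ∧ ¬ Q v}, ((M.wt a u.1 : ℚ) : ℝ))) :
    (∑' u : {v // M.sim a w v ∧ True ∧ Q v}, ((M.wt a u.1 : ℚ) : ℝ)) >
      (∑' u : {v // M.sim a w v ∧ True ∧ ¬ Q v}, ((M.wt a u.1 : ℚ) : ℝ)) := by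
  classical
  set f : W → ℝ := fun v => ((M.wt a v : ℚ) : ℝ) with hf
  have hf0 : ∀ v, 0 ≤ f v := fun v => by
    have := M.wt_pos a v
    simp only [hf]
    positivity
  have hcell : Summable (fun u : {v // M.sim a w v} => f u.1) := M.wt_summable a w
  have hcellInd : Summable (({v | M.sim a w v} : Set W).indicator f) :=
    (summable_subtype_iff_indicator).mp hcell
  have hsub : ∀ s : Set W, s ⊆ {v | M.sim a w v} → Summable (s.indicator f) := by
    intro s hs
    refine Summable.of_nonneg_of_le (fun v => Set.indicator_nonneg (fun x _ => hf0 x) v)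
      (fun v => Set.indicator_le_indicator_of_subset hs hf0 v) hcellInd
  set s1 : Set W := {v | M.sim a w v ∧ P v ∧ Q v} with hs1
  set s2 : Set W := {v | M.sim a w v ∧ P v ∧ ¬ Q v} with hs2
  set s3 : Set W := {v | M.sim a w v ∧ ¬ P v ∧ Q v} with hs3
  set s4 : Set W := {v | M.sim a w v ∧ ¬ P v ∧ ¬ Q v} with hs4
  have hub1 : s1 ⊆ {v | M.sim a w v} := fun v hv => hv.1
  have hub2 : s2 ⊆ {v | M.sim a w v} := fun v hv => hv.1
  have hub3 : s3 ⊆ {v | M.sim a w v} := fun v hv => hv.1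
  have hub4 : s4 ⊆ {v | M.sim a w v} := fun v hv => hv.1
  have eQ : ({v | M.sim a w v ∧ True ∧ Q v} : Set W) = s1 ∪ s3 := by
    ext v; simp only [hs1, hs3, Set.mem_setOf_eq, Set.mem_union]; tauto
  have eNQ : ({v | M.sim a w v ∧ True ∧ ¬ Q v} : Set W) = s2 ∪ s4 := by
    ext v; simp only [hs2, hs4, Set.mem_setOf_eq, Set.mem_union]; tauto
  have d13 : Disjoint s1 s3 := by
    rw [Set.disjoint_left]; intro v hv hv'; exact hv'.2.1 hv.2.1
  have d24 : Disjoint s2 s4 := by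
    rw [Set.disjoint_left]; intro v hv hv'; exact hv'.2.1 hv.2.1
  have key : ∀ s : Set W, (∑' u : {v // v ∈ s}, f u.1) = ∑' v, s.indicator f v :=
    fun s => tsum_subtype s f
  have t1 : (∑' u : {v // M.sim a w v ∧ P v ∧ Q v}, f u.1) = ∑' v, s1.indicator f v := key s1
  have t2 : (∑' u : {v // M.sim a w v ∧ P v ∧ ¬ Q v}, f u.1) = ∑' v, s2.indicator f v := key s2
  have t3 : (∑' u : {v // M.sim a w v ∧ ¬ P v ∧ Q v}, f u.1) = ∑' v, s3.indicator f v := key s3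
  have t4 : (∑' u : {v // M.sim a w v ∧ ¬ P v ∧ ¬ Q v}, f u.1) = ∑' v, s4.indicator f v := key s4
  have tQ : (∑' u : {v // M.sim a w v ∧ True ∧ Q v}, f u.1) =
      ∑' v, ({v | M.sim a w v ∧ True ∧ Q v} : Set W).indicator f v :=
    key {v | M.sim a w v ∧ True ∧ Q v}
  have tNQ : (∑' u : {v // M.sim a w v ∧ True ∧ ¬ Q v}, f u.1) =
      ∑' v, ({v | M.sim a w v ∧ True ∧ ¬ Q v} : Set W).indicator f v :=
    key {v | M.sim a w v ∧ True ∧ ¬ Q v}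
  have addQ : ∑' v, ({v | M.sim a w v ∧ True ∧ Q v} : Set W).indicator f v =
      (∑' v, s1.indicator f v) + (∑' v, s3.indicator f v) := by
    rw [eQ, Set.indicator_union_of_disjoint d13]
    exact Summable.tsum_add (hsub s1 hub1) (hsub s3 hub3)
  have addNQ : ∑' v, ({v | M.sim a w v ∧ True ∧ ¬ Q v} : Set W).indicator f v =
      (∑' v, s2.indicator f v) + (∑' v, s4.indicator f v) := by
    rw [eNQ, Set.indicator_union_of_disjoint d24]
    exact Summable.tsum_add (hsub s2 hub2) (hsub s4 hub4)
  rw [t1, t2] at h1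
  rw [t3, t4] at h2
  rw [tQ, tNQ, addQ, addNQ]
  linarith

end Validity

/-- Incompleteness of CN for epistemic weight models: the Sure Thing formula
`B_a(p,q) ∧ B_a(¬p,q) → B_a(⊤,q)` is valid on all epistemic weight models but
not derivable in the CN calculus. -/
theorem cn_incomplete_for_weight {Agt Prp : Type} [Finite Agt]
    (a : Agt) (p q : Prp) (hpq : p ≠ q) :
    (∀ (W : Type) (M : WeightModel Agt Prp W) (w : W),
        M.truth
          (CNForm.imp (.and (.bel a (.atom p) (.atom q)) (.bel a (.neg (.atom p)) (.atom q)))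
            (.bel a .top (.atom q))) w) ∧
    ¬ CNDeriv
        (CNForm.imp (.and (.bel a (.atom p) (.atom q)) (.bel a (.neg (.atom p)) (.atom q)))
          (.bel a .top (.atom q))) := by
  constructor
  · intro W M w
    simp only [CNForm.imp, WeightModel.truth]
    rintro ⟨⟨h1, h2⟩, h3⟩
    exact h3 (weight_sure M a w (fun v => v ∈ M.V p) (fun v => v ∈ M.V q) h1 h2)
  · intro hd
    have hs := Tr_sound p q hd (0 : Fin 4)
    rw [Tr_imp] at hs
    have hP : ∀ v : Fin 4, Tr p q (CNForm.atom p : CNForm Agt Prp) v ↔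
        v ∈ ({0, 2} : Set (Fin 4)) := by
      intro v
      show (p = p ∧ v ∈ ({0, 2} : Set (Fin 4))) ∨ (p = q ∧ v ∈ ({0, 1} : Set (Fin 4))) ↔ _
      simp [hpq]
    have hQ : ∀ v : Fin 4, Tr p q (CNForm.atom q : CNForm Agt Prp) v ↔
        v ∈ ({0, 1} : Set (Fin 4)) := by
      intro v
      show (q = p ∧ v ∈ ({0, 2} : Set (Fin 4))) ∨ (q = q ∧ v ∈ ({0, 1} : Set (Fin 4))) ↔ _
      simp [hpq.symm]
    have e1 : {v : Fin 4 | Tr p q (CNForm.atom p : CNForm Agt Prp) v ∧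
        Tr p q (CNForm.atom q : CNForm Agt Prp) v} = ({0} : Set (Fin 4)) := by
      ext v; simp only [Set.mem_setOf_eq, hP, hQ]; fin_cases v <;> simp <;> decide
    have e2 : {v : Fin 4 | Tr p q (CNForm.atom p : CNForm Agt Prp) v ∧
        ¬ Tr p q (CNForm.atom q : CNForm Agt Prp) v} = ({2} : Set (Fin 4)) := by
      ext v; simp only [Set.mem_setOf_eq, hP, hQ]; fin_cases v <;> simp <;> decide
    have e3 : {v : Fin 4 | Tr p q ((CNForm.atom p).neg : CNForm Agt Prp) v ∧
        Tr p q (CNForm.atom q : CNForm Agt Prp) v} = ({1} : Set (Fin 4)) := by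
      ext v; simp only [Set.mem_setOf_eq, Tr_neg, hP, hQ]; fin_cases v <;> simp <;> decide
    have e4 : {v : Fin 4 | Tr p q ((CNForm.atom p).neg : CNForm Agt Prp) v ∧
        ¬ Tr p q (CNForm.atom q : CNForm Agt Prp) v} = ({3} : Set (Fin 4)) := by
      ext v; simp only [Set.mem_setOf_eq, Tr_neg, hP, hQ]; fin_cases v <;> simp <;> decide
    have e5 : {v : Fin 4 | Tr p q (CNForm.top : CNForm Agt Prp) v ∧
        Tr p q (CNForm.atom q : CNForm Agt Prp) v} = ({0, 1} : Set (Fin 4)) := by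
      ext v; simp only [Set.mem_setOf_eq, Tr_top, true_and, hQ]
    have e6 : {v : Fin 4 | Tr p q (CNForm.top : CNForm Agt Prp) v ∧
        ¬ Tr p q (CNForm.atom q : CNForm Agt Prp) v} = ({2, 3} : Set (Fin 4)) := by
      ext v; simp only [Set.mem_setOf_eq, Tr_top, true_and, hQ]
      fin_cases v <;> simp <;> decide
    have n1 : nu ({0} : Set (Fin 4)) = 3 := by rw [nu_four]; simp (config := { decide := true }) [Set.mem_insert_iff, Set.mem_singleton_iff]; all_goals norm_num
    have n2 : nu ({2} : Set (Fin 4)) = 2 := by rw [nu_four]; simp (config := { decide := true }) [Set.mem_insert_iff, Set.mem_singleton_iff]; all_goals norm_num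
    have n3 : nu ({1} : Set (Fin 4)) = 3 := by rw [nu_four]; simp (config := { decide := true }) [Set.mem_insert_iff, Set.mem_singleton_iff]; all_goals norm_num
    have n4 : nu ({3} : Set (Fin 4)) = 2 := by rw [nu_four]; simp (config := { decide := true }) [Set.mem_insert_iff, Set.mem_singleton_iff]; all_goals norm_num
    have n5 : nu ({0, 1} : Set (Fin 4)) = 6 := by rw [nu_four]; simp (config := { decide := true }) [Set.mem_insert_iff, Set.mem_singleton_iff]; all_goals norm_num
    have n6 : nu ({2, 3} : Set (Fin 4)) = 7 := by rw [nu_four]; simp (config := { decide := true }) [Set.mem_insert_iff, Set.mem_singleton_iff]; all_goals norm_num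
    have hant : Tr p q ((CNForm.bel a (.atom p) (.atom q)).and
        (CNForm.bel a (.neg (.atom p)) (.atom q)) : CNForm Agt Prp) 0 := by
      rw [Tr_and, Tr_bel, Tr_bel]
      constructor
      · rw [e1, e2, n1, n2]; norm_num
      · rw [e3, e4, n3, n4]; norm_num
    have hcon := hs hant
    rw [Tr_bel, e5, e6, n5, n6] at hcon
    norm_num at hcon
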